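/- Let q ≥ 2 be an integer and let n, d be integers with 1 ≤ d ≤ n. Then, as real numbers, α(n,d) < (14/5)·q^{n(n−d+1)} if d is odd, and α(n,d) < (14/5)·q^{n(n−d+2)} if d is even. -/

import Mathlib

open Finset

/-- The correction factor `ε(n,d)` for even `d`. -/
noncomputable def epsHerm (q n d : ℕ) : ℝ :=
  (((-(q : ℝ)) ^ (n - d + 2) - 1) +
      q * (((-(q : ℝ)) ^ (n + d - 2) - 1) / (q * (-(q : ℝ)) ^ (d - 2) - 1)) *
        ((-(q : ℝ)) ^ (n - d + 1) - 1)) /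
  (((-(q : ℝ)) ^ (n - d + 2) - 1) +
      q * (((-(q : ℝ)) ^ (n + d - 2) - 1) / ((-(q : ℝ)) ^ (n + d - 1) - 1)) *
        ((-(q : ℝ)) ^ (n - d + 1) - 1))

/-- The bound `α(n,d)`. -/
noncomputable def alphaBound (q n d : ℕ) : ℝ :=
  (∏ i ∈ Finset.range n, (1 + (q : ℝ) ^ (2 * i + 1))) *
    (∏ i ∈ Finset.range (d - 1),
      (1 + (-(q : ℝ)) ^ (i + 1)) / (1 - (-(q : ℝ)) ^ (n + i + 1))) *
    (if Even d then epsHerm q n d else 1)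

lemma lemA (Q:ℝ) (hQ : 2 ≤ Q) : ∀ n, 1 ≤ n →
    (Q^2-1) * Q^(2*n) * ∏ i ∈ range n, (1 + Q^(2*i+1)) ≤
    (9/5) * ((Q^2-1)*Q^(2*n) - Q) * Q^(n*n) := by
  intro n hn
  induction n with
  | zero => omega
  | succ n ih =>
    rcases Nat.eq_or_lt_of_le hn with h1 | h1
    · have : n = 0 := by omega
      subst this
      simp [prod_range_succ]
      nlinarith [sq_nonneg Q, sq_nonneg (Q-2), mul_nonneg (mul_nonneg (sub_nonneg.2 hQ) (sub_nonneg.2 hQ)) (sub_nonneg.2 hQ)]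
    · have hn' : 1 ≤ n := by omega
      have IH := ih hn'
      have hQ0 : (0:ℝ) < Q := by linarith
      set u : ℝ := Q^(2*n) with hu
      have hu1 : (1:ℝ) ≤ u := one_le_pow₀ (by linarith)
      have hP : (0:ℝ) < ∏ i ∈ range n, (1 + Q^(2*i+1)) :=
        prod_pos (fun i _ => by positivity)
      have e1 : Q^(2*(n+1)) = u * Q^2 := by rw [hu, ← pow_add]; ring_nf
      have e2 : Q^((n+1)*(n+1)) = Q^(n*n) * u * Q := by
        rw [hu, ← pow_add, ← pow_succ]
        congr 1; ring
      rw [prod_range_succ, e1, e2]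
      have hQn : (0:ℝ) < Q^(n*n) := by positivity
      have key : (9/5) * ((Q^2-1)*u - Q) * ((1 + Q*u) * Q^2) ≤
          (9/5) * ((Q^2-1)*(u*Q^2) - Q) * (u * Q) := by
        nlinarith [hu1, hQ0]
      have e3 : Q^(2*n+1) = Q * u := by rw [hu, pow_succ']
      calc (Q^2-1) * (u*Q^2) * ((∏ i ∈ range n, (1 + Q^(2*i+1))) * (1 + Q^(2*n+1)))
          = ((Q^2-1) * u * ∏ i ∈ range n, (1 + Q^(2*i+1))) * ((1 + Q*u) * Q^2) := by
            rw [e3]; ring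
        _ ≤ ((9/5) * ((Q^2-1)*u - Q) * Q^(n*n)) * ((1 + Q*u) * Q^2) := by
            apply mul_le_mul_of_nonneg_right IH
            positivity
        _ ≤ (9/5) * ((Q^2-1)*(u*Q^2) - Q) * (Q^(n*n) * u * Q) := by
            calc (9/5) * ((Q^2-1)*u - Q) * Q^(n*n) * ((1 + Q*u) * Q^2)
                = ((9/5) * ((Q^2-1)*u - Q) * ((1 + Q*u) * Q^2)) * Q^(n*n) := by ring
              _ ≤ ((9/5) * ((Q^2-1)*(u*Q^2) - Q) * (u * Q)) * Q^(n*n) :=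
                  mul_le_mul_of_nonneg_right key (le_of_lt hQn)
              _ = (9/5) * ((Q^2-1)*(u*Q^2) - Q) * (Q^(n*n) * u * Q) := by ring

lemma geom2 {r : ℝ} (h0 : 0 ≤ r) (h2 : r ≤ 1/2) : ∀ m, ∑ i ∈ range m, r^i ≤ 2 := by
  intro m
  induction m with
  | zero => norm_num
  | succ m ih =>
    rw [Finset.sum_range_succ']
    have e : ∑ i ∈ range m, r^(i+1) = r * ∑ i ∈ range m, r^i := by
      rw [Finset.mul_sum]; exact Finset.sum_congr rfl (fun i _ => by rw [pow_succ'])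
    rw [e]
    have : r * ∑ i ∈ range m, r^i ≤ r * 2 := mul_le_mul_of_nonneg_left ih h0
    simp only [pow_zero]
    nlinarith

lemma weier (x : ℕ → ℝ) (h0 : ∀ i, 0 ≤ x i) (h1 : ∀ i, x i ≤ 1) :
    ∀ m, 1 - (∑ i ∈ range m, x i) ≤ ∏ i ∈ range m, (1 - x i) := by
  intro m
  induction m with
  | zero => norm_num
  | succ m ih =>
    rw [Finset.sum_range_succ, Finset.prod_range_succ]
    have hS : 0 ≤ ∑ i ∈ range m, x i := Finset.sum_nonneg (fun i _ => h0 i)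
    have h2 : (1 - ∑ i ∈ range m, x i) * (1 - x m) ≤ (∏ i ∈ range m, (1 - x i)) * (1 - x m) :=
      mul_le_mul_of_nonneg_right ih (by linarith [h1 m])
    nlinarith [h0 m, h1 m]

lemma lemB1 (Q:ℝ) (hQ : 2 ≤ Q) : ∀ m, ∏ i ∈ range m, |1+(-Q)^(i+1)| ≤
    (if Even m then 1 else 1-(1/Q)^m) * Q^(∑ i ∈ range m, (i+1)) := by
  have hQ0 : (0:ℝ) < Q := by linarith
  have hpow : ∀ k:ℕ, (1:ℝ) ≤ Q^k := fun k => one_le_pow₀ (by linarith)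
  intro m
  induction m using Nat.twoStepInduction with
  | zero => norm_num
  | one =>
    rw [Finset.prod_range_one, Finset.sum_range_one, pow_one]
    rw [if_neg (by decide), pow_one, pow_one]
    rw [abs_of_nonpos (by linarith)]
    field_simp
    linarith
  | more n ih _ =>
    rw [Finset.prod_range_succ, Finset.prod_range_succ,
        Finset.sum_range_succ, Finset.sum_range_succ]
    have eS : Q ^ (∑ x ∈ range n, (x+1) + (n+1) + (n+1+1)) =
        Q^(∑ x ∈ range n, (x+1)) * Q^(n+1) * Q^(n+2) := by
      rw [pow_add, pow_add]
    have hA : (1:ℝ) ≤ Q^(n+1) := hpow _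
    have hB : (1:ℝ) ≤ Q^(n+2) := hpow _
    have hAB : Q^(n+1) ≤ Q^(n+2) := pow_le_pow_right₀ (by linarith) (by omega)
    have hPn : (0:ℝ) ≤ ∏ i ∈ range n, |1+(-Q)^(i+1)| :=
      Finset.prod_nonneg (fun i _ => abs_nonneg _)
    have hQs : (0:ℝ) ≤ Q^(∑ i ∈ range n, (i+1)) := by positivity
    rcases Nat.even_or_odd n with he | ho
    · -- n even : factors (Q^(n+1)-1), (Q^(n+2)+1)
      have hno : Odd (n+1) := by
        have := Nat.even_iff.mp he; rw [Nat.odd_iff]; omega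
      have hf1 : |1+(-Q)^(n+1)| = Q^(n+1) - 1 := by
        rw [hno.neg_pow, abs_of_nonpos (by linarith)]; ring
      have hf2 : |1+(-Q)^(n+1+1)| = 1 + Q^(n+2) := by
        obtain ⟨j, hj⟩ := he
        rw [show n+1+1 = n+2 from rfl, Even.neg_pow ⟨j+1, by omega⟩,
          abs_of_nonneg (by linarith)]
      have he2 : Even (n+2) := by obtain ⟨j, hj⟩ := he; exact ⟨j+1, by omega⟩
      rw [hf1, hf2, if_pos he2, eS]
      have hih : ∏ i ∈ range n, |1+(-Q)^(i+1)| ≤ Q^(∑ i ∈ range n, (i+1)) := by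
        simpa [if_pos he] using ih
      have hkey : (Q^(n+1) - 1) * (1 + Q^(n+2)) ≤ Q^(n+1) * Q^(n+2) := by nlinarith
      calc (∏ i ∈ range n, |1+(-Q)^(i+1)|) * (Q^(n+1)-1) * (1 + Q^(n+2))
          = (∏ i ∈ range n, |1+(-Q)^(i+1)|) * ((Q^(n+1)-1) * (1 + Q^(n+2))) := by ring
        _ ≤ Q^(∑ i ∈ range n, (i+1)) * ((Q^(n+1)-1) * (1 + Q^(n+2))) :=
            mul_le_mul_of_nonneg_right hih (by nlinarith)
        _ ≤ Q^(∑ i ∈ range n, (i+1)) * (Q^(n+1) * Q^(n+2)) :=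
            mul_le_mul_of_nonneg_left hkey hQs
        _ = 1 * (Q^(∑ i ∈ range n, (i+1)) * Q^(n+1) * Q^(n+2)) := by ring
    · -- n odd : factors (Q^(n+1)+1), (Q^(n+2)-1)
      obtain ⟨j, hj⟩ := ho
      have hne : ¬ Even n := by rw [Nat.even_iff]; omega
      have hne2 : ¬ Even (n+2) := by rw [Nat.even_iff]; omega
      have hf1 : |1+(-Q)^(n+1)| = 1 + Q^(n+1) := by
        rw [Even.neg_pow ⟨j+1, by omega⟩, abs_of_nonneg (by linarith)]
      have hf2 : |1+(-Q)^(n+1+1)| = Q^(n+2) - 1 := by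
        rw [show n+1+1 = n+2 from rfl, Odd.neg_pow ⟨j+1, by omega⟩,
          abs_of_nonpos (by linarith)]; ring
      rw [hf1, hf2, if_neg hne2, eS]
      have hih : ∏ i ∈ range n, |1+(-Q)^(i+1)| ≤
          (1-(1/Q)^n) * Q^(∑ i ∈ range n, (i+1)) := by
        simpa [if_neg hne] using ih
      set t : ℝ := (1/Q)^n with htdef
      set t' : ℝ := (1/Q)^(n+2) with ht'def
      have ht0 : 0 ≤ t := by positivity
      have ht1 : t ≤ 1 := pow_le_one₀ (by positivity) (by rw [div_le_one hQ0]; linarith)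
      have ht'0 : 0 ≤ t' := by positivity
      have htA : t * Q^(n+1) = Q := by
        rw [htdef, pow_succ, ← mul_assoc, ← mul_pow]
        field_simp
        simp
      have ht'2 : t' * (Q * (Q^(n+1) * Q^(n+1))) = Q^(n+1) := by
        rw [ht'def]
        have : Q * (Q^(n+1) * Q^(n+1)) = Q^(n+2) * Q^(n+1) := by
          rw [pow_succ]; ring
        rw [this, ← mul_assoc, ← mul_pow]
        field_simp
        simp
      have hBe : Q^(n+2) = Q * Q^(n+1) := by rw [pow_succ]; ring
      have hkey : (1-t) * ((1+Q^(n+1)) * (Q^(n+2)-1)) ≤ (1-t') * (Q^(n+1) * Q^(n+2)) := by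
        rw [hBe]
        calc (1-t)*((1+Q^(n+1))*(Q*Q^(n+1)-1))
            = (1+Q^(n+1))*(Q*Q^(n+1)-1)
              - ((t*Q^(n+1))*Q + (t*Q^(n+1))*(Q*Q^(n+1))) + t + (t*Q^(n+1)) := by ring
          _ = (1+Q^(n+1))*(Q*Q^(n+1)-1) - (Q*Q + Q*(Q*Q^(n+1))) + t + Q := by rw [htA]
          _ ≤ (1+Q^(n+1))*(Q*Q^(n+1)-1) - (Q*Q + Q*(Q*Q^(n+1))) + 1 + Q := by linarith
          _ ≤ Q^(n+1)*(Q*Q^(n+1)) - Q^(n+1) := by nlinarith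
          _ = (1-t') * (Q^(n+1)*(Q*Q^(n+1))) := by
              have e : (1-t')*(Q^(n+1)*(Q*Q^(n+1))) =
                  Q^(n+1)*(Q*Q^(n+1)) - t'*(Q*(Q^(n+1)*Q^(n+1))) := by ring
              rw [e, ht'2]
      calc (∏ i ∈ range n, |1+(-Q)^(i+1)|) * (1+Q^(n+1)) * (Q^(n+2)-1)
          = (∏ i ∈ range n, |1+(-Q)^(i+1)|) * ((1+Q^(n+1)) * (Q^(n+2)-1)) := by ring
        _ ≤ ((1-t) * Q^(∑ i ∈ range n, (i+1))) * ((1+Q^(n+1)) * (Q^(n+2)-1)) :=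
            mul_le_mul_of_nonneg_right hih (by nlinarith)
        _ = ((1-t) * ((1+Q^(n+1)) * (Q^(n+2)-1))) * Q^(∑ i ∈ range n, (i+1)) := by ring
        _ ≤ ((1-t') * (Q^(n+1) * Q^(n+2))) * Q^(∑ i ∈ range n, (i+1)) :=
            mul_le_mul_of_nonneg_right hkey hQs
        _ = (1-t') * (Q^(∑ i ∈ range n, (i+1)) * Q^(n+1) * Q^(n+2)) := by ring

lemma lemB2 (Q:ℝ) (hQ : 2 ≤ Q) (n m : ℕ) (hn : 2 ≤ n) :
    (3/4) * Q^(∑ i ∈ range m, (n+i+1)) ≤ ∏ i ∈ range m, |1-(-Q)^(n+i+1)| := by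
  have hQ0 : (0:ℝ) < Q := by linarith
  have hr0 : (0:ℝ) ≤ 1/Q := by positivity
  have hr2 : (1:ℝ)/Q ≤ 1/2 := by
    rw [div_le_div_iff₀ hQ0 (by norm_num)]; linarith
  have hr1 : (1:ℝ)/Q ≤ 1 := by linarith
  have hxle : ∀ k:ℕ, ((1:ℝ)/Q)^k ≤ 1 := fun k => pow_le_one₀ hr0 hr1
  have hQinv : ∀ k:ℕ, Q^k * (1/Q)^k = 1 := by
    intro k; rw [← mul_pow]; field_simp; simp
  -- sum of x_i is at most 1/4
  have hsum : ∑ i ∈ range m, ((1:ℝ)/Q)^(n+i+1) ≤ 1/4 := by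
    have e : ∀ i ∈ range m, ((1:ℝ)/Q)^(n+i+1) = (1/Q)^(n+1) * (1/Q)^i := by
      intro i _; rw [← pow_add]; congr 1; omega
    rw [Finset.sum_congr rfl e, ← Finset.mul_sum]
    have h1 : ∑ i ∈ range m, ((1:ℝ)/Q)^i ≤ 2 := geom2 hr0 hr2 m
    have h2 : ((1:ℝ)/Q)^(n+1) ≤ (1/2)^(n+1) := pow_le_pow_left₀ hr0 hr2 _
    have h3 : ((1:ℝ)/2)^(n+1) ≤ (1/2)^3 :=
      pow_le_pow_of_le_one (by norm_num) (by norm_num) (by omega)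
    have h4 : (0:ℝ) ≤ ∑ i ∈ range m, ((1:ℝ)/Q)^i :=
      Finset.sum_nonneg (fun i _ => by positivity)
    calc ((1:ℝ)/Q)^(n+1) * ∑ i ∈ range m, ((1:ℝ)/Q)^i
        ≤ (1/2)^3 * 2 := by
          apply mul_le_mul (le_trans h2 h3) h1 h4 (by norm_num)
      _ = 1/4 := by norm_num
  have hprod : (3/4 : ℝ) ≤ ∏ i ∈ range m, (1 - (1/Q)^(n+i+1)) := by
    have := weier (fun i => (1/Q)^(n+i+1)) (fun i => by positivity) (fun i => hxle _) m
    linarith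
  -- each factor bound
  have hfac : ∀ i ∈ range m, Q^(n+i+1) * (1 - (1/Q)^(n+i+1)) ≤ |1-(-Q)^(n+i+1)| := by
    intro i _
    have e1 : Q^(n+i+1) * (1 - (1/Q)^(n+i+1)) = Q^(n+i+1) - 1 := by
      rw [mul_sub, hQinv]; ring
    rw [e1, abs_sub_comm]
    have e2 : Q^(n+i+1) = |(-Q)^(n+i+1)| := by
      rw [abs_pow, abs_neg, abs_of_pos hQ0]
    calc Q^(n+i+1) - 1 = |(-Q)^(n+i+1)| - |(1:ℝ)| := by rw [← e2]; norm_num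
      _ ≤ |(-Q)^(n+i+1) - 1| := abs_sub_abs_le_abs_sub _ _
  calc (3/4) * Q^(∑ i ∈ range m, (n+i+1))
      ≤ (∏ i ∈ range m, (1 - (1/Q)^(n+i+1))) * Q^(∑ i ∈ range m, (n+i+1)) := by
        apply mul_le_mul_of_nonneg_right hprod (by positivity)
    _ = ∏ i ∈ range m, (Q^(n+i+1) * (1 - (1/Q)^(n+i+1))) := by
        rw [Finset.prod_mul_distrib, Finset.prod_pow_eq_pow_sum]; ring
    _ ≤ ∏ i ∈ range m, |1-(-Q)^(n+i+1)| := by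
        apply Finset.prod_le_prod
        · intro i _
          have : ((1:ℝ)/Q)^(n+i+1) ≤ 1 := hxle _
          have : (0:ℝ) ≤ 1 - (1/Q)^(n+i+1) := by linarith
          positivity
        · exact hfac

lemma lemB (Q:ℝ) (hQ : 2 ≤ Q) (n m : ℕ) (hn : 2 ≤ n) :
    |∏ i ∈ range m, (1+(-Q)^(i+1)) / (1-(-Q)^(n+i+1))| ≤ (4/3) / Q^(n*m) := by
  have hQ0 : (0:ℝ) < Q := by linarith
  rw [Finset.abs_prod]
  have e0 : ∀ i ∈ range m, |(1+(-Q)^(i+1)) / (1-(-Q)^(n+i+1))|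
      = |1+(-Q)^(i+1)| / |1-(-Q)^(n+i+1)| := fun i _ => abs_div _ _
  rw [Finset.prod_congr rfl e0, Finset.prod_div_distrib]
  have hnum : ∏ i ∈ range m, |1+(-Q)^(i+1)| ≤ Q^(∑ i ∈ range m, (i+1)) := by
    refine le_trans (lemB1 Q hQ m) ?_
    have h1 : (if Even m then (1:ℝ) else 1-(1/Q)^m) ≤ 1 := by
      split
      · exact le_refl 1
      · have : (0:ℝ) ≤ (1/Q)^m := by positivity
        linarith
    calc (if Even m then (1:ℝ) else 1-(1/Q)^m) * Q^(∑ i ∈ range m, (i+1))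
        ≤ 1 * Q^(∑ i ∈ range m, (i+1)) :=
          mul_le_mul_of_nonneg_right h1 (by positivity)
      _ = Q^(∑ i ∈ range m, (i+1)) := one_mul _
  have hden : (3/4 : ℝ) * Q^(∑ i ∈ range m, (n+i+1)) ≤
      ∏ i ∈ range m, |1-(-Q)^(n+i+1)| := lemB2 Q hQ n m hn
  have hd0 : (0:ℝ) < (3/4 : ℝ) * Q^(∑ i ∈ range m, (n+i+1)) := by positivity
  have hnum0 : (0:ℝ) ≤ Q^(∑ i ∈ range m, (i+1)) := by positivity
  have step : (∏ x ∈ range m, |1 + (-Q)^(x+1)|) / ∏ x ∈ range m, |1 - (-Q)^(n+x+1)|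
      ≤ Q^(∑ i ∈ range m, (i+1)) / ((3/4) * Q^(∑ i ∈ range m, (n+i+1))) :=
    div_le_div₀ hnum0 hnum hd0 hden
  refine le_trans step (le_of_eq ?_)
  have hSS : ∑ i ∈ range m, (n+i+1) = n*m + ∑ i ∈ range m, (i+1) := by
    have e : ∀ i ∈ range m, n+i+1 = n + (i+1) := fun i _ => by omega
    rw [Finset.sum_congr rfl e, Finset.sum_add_distrib, Finset.sum_const,
      Finset.card_range, smul_eq_mul, Nat.mul_comm]
  rw [hSS, pow_add]
  have h2 : (Q:ℝ)^(∑ i ∈ range m, (i+1)) ≠ 0 := by positivity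
  have h3 : (Q:ℝ)^(n*m) ≠ 0 := by positivity
  field_simp

set_option maxHeartbeats 1000000 in
lemma epsAux1 (Q x y B : ℝ) (hQ : 2 ≤ Q) (hx : Q ≤ x) (hy : Q ≤ y) (hB : Q*B = x*y^2) :
    |((Q*x - 1) + Q*((B - 1)/(y - 1))*(-x - 1)) /
     ((Q*x - 1) + Q*((B - 1)/(-(x*y^2) - 1))*(-x - 1))| ≤ x*y := by
  have hx2 : (2:ℝ) ≤ x := le_trans hQ hx
  have hy2 : (2:ℝ) ≤ y := le_trans hQ hy
  have hy1 : (0:ℝ) < y - 1 := by linarith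
  have hxy2 : (0:ℝ) < x*y^2 + 1 := by nlinarith
  have hxyQ : Q*1 ≤ x*y^2 := mul_le_mul hx (by nlinarith) (by norm_num) (by linarith)
  have hT0 : (0:ℝ) ≤ (x*y^2 - Q)*(x+1) := mul_nonneg (by linarith) (by linarith)
  have hB' : Q*(B - 1) = x*y^2 - Q := by rw [mul_sub, hB]; ring
  have eN : (Q*x - 1) + Q*((B - 1)/(y - 1))*(-x - 1)
      = (Q*x - 1) - (x*y^2 - Q)*(x+1)/(y - 1) := by
    have t1 : Q*((B - 1)/(y - 1))*(-x - 1) = (Q*(B-1))*(-x - 1)/(y - 1) := by ring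
    rw [t1, hB']; ring
  have eD : (Q*x - 1) + Q*((B - 1)/(-(x*y^2) - 1))*(-x - 1)
      = (Q*x - 1) + (x*y^2 - Q)*(x+1)/(x*y^2 + 1) := by
    have t1 : Q*((B - 1)/(-(x*y^2) - 1))*(-x - 1)
        = (Q*(B-1))*(-x - 1)/(-(x*y^2) - 1) := by ring
    have hne : (-(x*y^2) - 1 : ℝ) ≠ 0 := ne_of_lt (by nlinarith)
    have hne2 : (x*y^2 + 1 : ℝ) ≠ 0 := ne_of_gt hxy2
    rw [t1, hB']
    field_simp
    ring
  rw [eN, eD]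
  have hDpos : (0:ℝ) < (Q*x - 1) + (x*y^2 - Q)*(x+1)/(x*y^2 + 1) := by
    have h2 : (0:ℝ) ≤ (x*y^2 - Q)*(x+1)/(x*y^2 + 1) := div_nonneg hT0 (le_of_lt hxy2)
    nlinarith
  rw [abs_div, abs_of_pos hDpos, div_le_iff₀ hDpos, abs_le]
  have hyne : (y - 1 : ℝ) ≠ 0 := ne_of_gt hy1
  have hxyne : (x*y^2 + 1 : ℝ) ≠ 0 := ne_of_gt hxy2
  constructor
  · -- -(x*y*D) ≤ N
    have e2 : ((Q*x - 1) - (x*y^2 - Q)*(x+1)/(y - 1))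
        + x*y*((Q*x - 1) + (x*y^2 - Q)*(x+1)/(x*y^2 + 1))
        = ((x*y+1)*((Q*x-1)*((y-1)*(x*y^2+1)) - (x*y^2-Q)*(x+1)))/((y-1)*(x*y^2+1)) := by
      field_simp; ring
    have inner : (x*y^2-Q)*(x+1) ≤ (Q*x-1)*((y-1)*(x*y^2+1)) := by
      have c1 : (x*y^2-Q)*(x+1) ≤ x*y^2*(x+1) :=
        mul_le_mul_of_nonneg_right (by linarith) (by linarith)
      have c2 : x*y^2*(x+1) ≤ x*y^2*(2*x-1) :=
        mul_le_mul_of_nonneg_left (by linarith) (by nlinarith)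
      have c3 : x*y^2*(2*x-1) ≤ (2*x-1)*(x*y^2+1) := by nlinarith
      have d1 : (2*x-1) ≤ (Q*x-1) := by nlinarith
      have d2 : (x*y^2+1) ≤ (y-1)*(x*y^2+1) :=
        le_mul_of_one_le_left (by linarith) (by linarith)
      have c4 : (2*x-1)*(x*y^2+1) ≤ (Q*x-1)*((y-1)*(x*y^2+1)) :=
        mul_le_mul d1 d2 (by linarith) (by nlinarith)
      linarith
    have hnum0 : (0:ℝ) ≤ (x*y+1)*((Q*x-1)*((y-1)*(x*y^2+1)) - (x*y^2-Q)*(x+1)) :=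
      mul_nonneg (by nlinarith) (by linarith)
    have := div_nonneg hnum0 (mul_nonneg (by linarith : (0:ℝ) ≤ y-1) (by linarith : (0:ℝ) ≤ x*y^2+1))
    linarith [e2 ▸ this]
  · -- N ≤ x*y*D
    have e3 : x*y*((Q*x - 1) + (x*y^2 - Q)*(x+1)/(x*y^2 + 1))
        - ((Q*x - 1) - (x*y^2 - Q)*(x+1)/(y - 1))
        = ((x*y-1)*((Q*x-1)*((y-1)*(x*y^2+1)))
           + (x*y^2-Q)*(x+1)*(x*y*(y-1) + (x*y^2+1)))/((y-1)*(x*y^2+1)) := by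
      field_simp; ring
    have q1 : (0:ℝ) ≤ x*y - 1 := by nlinarith
    have q2 : (0:ℝ) ≤ Q*x - 1 := by nlinarith
    have q3 : (0:ℝ) ≤ (y-1)*(x*y^2+1) := mul_nonneg (by linarith) (by linarith)
    have q4 : (0:ℝ) ≤ x*y*(y-1) := mul_nonneg (mul_nonneg (by linarith) (by linarith)) (by linarith)
    have hnum0 : (0:ℝ) ≤ (x*y-1)*((Q*x-1)*((y-1)*(x*y^2+1)))
        + (x*y^2-Q)*(x+1)*(x*y*(y-1) + (x*y^2+1)) := by
      have p1 : (0:ℝ) ≤ (x*y-1)*((Q*x-1)*((y-1)*(x*y^2+1))) :=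
        mul_nonneg q1 (mul_nonneg q2 q3)
      have p2 : (0:ℝ) ≤ (x*y^2-Q)*(x+1)*(x*y*(y-1) + (x*y^2+1)) :=
        mul_nonneg hT0 (by linarith)
      linarith
    have := div_nonneg hnum0 q3
    linarith [e3 ▸ this]

set_option maxHeartbeats 1000000 in
lemma epsAux2 (Q x y B : ℝ) (hQ : 2 ≤ Q) (hx : Q ≤ x) (hy : Q ≤ y) (hB : Q*B = -(x*y^2)) :
    |((-(Q*x) - 1) + Q*((B - 1)/(y - 1))*(x - 1)) /
     ((-(Q*x) - 1) + Q*((B - 1)/(x*y^2 - 1))*(x - 1))| ≤ x*y := by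
  have hx2 : (2:ℝ) ≤ x := le_trans hQ hx
  have hy2 : (2:ℝ) ≤ y := le_trans hQ hy
  have hy1 : (0:ℝ) < y - 1 := by linarith
  have hxy2 : (0:ℝ) < x*y^2 - 1 := by nlinarith
  have hU0 : (0:ℝ) ≤ (x*y^2 + Q)*(x-1) := by nlinarith
  have hB' : Q*(B - 1) = -(x*y^2 + Q) := by rw [mul_sub, hB]; ring
  have eN : (-(Q*x) - 1) + Q*((B - 1)/(y - 1))*(x - 1)
      = -((Q*x + 1) + (x*y^2 + Q)*(x-1)/(y - 1)) := by
    have t1 : Q*((B - 1)/(y - 1))*(x - 1) = (Q*(B-1))*(x - 1)/(y - 1) := by ring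
    rw [t1, hB']; ring
  have eD : (-(Q*x) - 1) + Q*((B - 1)/(x*y^2 - 1))*(x - 1)
      = -((Q*x + 1) + (x*y^2 + Q)*(x-1)/(x*y^2 - 1)) := by
    have t1 : Q*((B - 1)/(x*y^2 - 1))*(x - 1) = (Q*(B-1))*(x - 1)/(x*y^2 - 1) := by ring
    rw [t1, hB']; ring
  rw [eN, eD, neg_div_neg_eq]
  have hDpos : (0:ℝ) < (Q*x + 1) + (x*y^2 + Q)*(x-1)/(x*y^2 - 1) := by
    have h2 : (0:ℝ) ≤ (x*y^2 + Q)*(x-1)/(x*y^2 - 1) := div_nonneg hU0 (le_of_lt hxy2)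
    nlinarith
  have hNpos : (0:ℝ) < (Q*x + 1) + (x*y^2 + Q)*(x-1)/(y - 1) := by
    have h2 : (0:ℝ) ≤ (x*y^2 + Q)*(x-1)/(y - 1) := div_nonneg hU0 (le_of_lt hy1)
    nlinarith
  rw [abs_div, abs_of_pos hNpos, abs_of_pos hDpos, div_le_iff₀ hDpos]
  have e3 : x*y*((Q*x + 1) + (x*y^2 + Q)*(x-1)/(x*y^2 - 1))
      - ((Q*x + 1) + (x*y^2 + Q)*(x-1)/(y - 1))
      = ((x*y-1)*((Q*x+1)*((y-1)*(x*y^2-1)) - (x*y^2+Q)*(x-1)))/((y-1)*(x*y^2-1)) := by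
    field_simp; ring
  have inner : (x*y^2+Q)*(x-1) ≤ (Q*x+1)*((y-1)*(x*y^2-1)) := by
    have c1 : (x*y^2+Q)*(x-1) ≤ (x*y^2+x)*(x-1) :=
      mul_le_mul_of_nonneg_right (by linarith) (by linarith)
    have hy4 : (4:ℝ) ≤ y^2 := by nlinarith
    have c2 : (x*y^2+x)*(x-1) ≤ (2*x+1)*(x*y^2-1) := by
      nlinarith [mul_le_mul_of_nonneg_left hy4 (sq_nonneg x), sq_nonneg (x-1), sq_nonneg x]
    have d1 : (2*x+1) ≤ (Q*x+1) := by nlinarith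
    have d2 : (x*y^2-1) ≤ (y-1)*(x*y^2-1) :=
      le_mul_of_one_le_left (by linarith) (by linarith)
    have c3 : (2*x+1)*(x*y^2-1) ≤ (Q*x+1)*((y-1)*(x*y^2-1)) :=
      mul_le_mul d1 d2 (by linarith) (by nlinarith)
    linarith
  have hnum0 : (0:ℝ) ≤ (x*y-1)*((Q*x+1)*((y-1)*(x*y^2-1)) - (x*y^2+Q)*(x-1)) :=
    mul_nonneg (by nlinarith) (by linarith)
  have := div_nonneg hnum0 (mul_nonneg (by linarith : (0:ℝ) ≤ y-1) (by linarith : (0:ℝ) ≤ x*y^2-1))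
  linarith [e3 ▸ this]

set_option maxHeartbeats 1000000 in
lemma lemC (q n d : ℕ) (hq : 2 ≤ q) (hd : 2 ≤ d) (hdn : d ≤ n) (hde : Even d) :
    |epsHerm q n d| ≤ (q:ℝ)^n := by
  obtain ⟨m, rfl⟩ : ∃ m, d = m + 2 := ⟨d-2, by omega⟩
  obtain ⟨k, rfl⟩ : ∃ k, n = m + 2 + k := ⟨n-(m+2), by omega⟩
  have hme : Even m := by
    have := Nat.even_iff.mp hde; exact Nat.even_iff.mpr (by omega)
  obtain ⟨c, hc⟩ := hme
  set Q : ℝ := (q:ℝ) with hQdef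
  have hQ : (2:ℝ) ≤ Q := by rw [hQdef]; exact_mod_cast hq
  have hQ1 : (1:ℝ) ≤ Q := by linarith
  unfold epsHerm
  rw [show m+2+k - (m+2) + 2 = k+2 by omega,
      show m+2+k + (m+2) - 2 = 2*m+k+2 by omega,
      show m+2 - 2 = m by omega,
      show m+2+k + (m+2) - 1 = 2*m+k+3 by omega,
      show m+2+k - (m+2) + 1 = k+1 by omega]
  have hQx : Q ≤ Q^(k+1) := by
    calc Q = Q^1 := (pow_one Q).symm
      _ ≤ Q^(k+1) := pow_le_pow_right₀ hQ1 (by omega)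
  have hQy : Q ≤ Q^(m+1) := by
    calc Q = Q^1 := (pow_one Q).symm
      _ ≤ Q^(m+1) := pow_le_pow_right₀ hQ1 (by omega)
  have em' : (-Q)^m = Q^m := Even.neg_pow ⟨c, hc⟩ Q
  have eQn : Q^(m+2+k) = Q^(k+1) * Q^(m+1) := by rw [← pow_add]; congr 1; omega
  have ey2 : (Q^(m+1))^2 = Q^(2*m+2) := by rw [← pow_mul]; congr 1; omega
  rcases Nat.even_or_odd k with ⟨j, hj⟩ | ⟨j, hj⟩
  · -- k even
    have e1 : (-Q)^(k+2) = Q^(k+2) := Even.neg_pow ⟨j+1, by omega⟩ Q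
    have e2 : (-Q)^(2*m+k+2) = Q^(2*m+k+2) := Even.neg_pow ⟨m+j+1, by omega⟩ Q
    have e3 : (-Q)^(2*m+k+3) = -Q^(2*m+k+3) := Odd.neg_pow ⟨m+j+1, by omega⟩ Q
    have e4 : (-Q)^(k+1) = -Q^(k+1) := Odd.neg_pow ⟨j, by omega⟩ Q
    rw [e1, e2, em', e3, e4, eQn]
    have hxx : Q^(k+2) = Q * Q^(k+1) := by rw [pow_succ]; ring
    have hyy : Q * Q^m = Q^(m+1) := by rw [pow_succ]; ring
    have hBB : Q * Q^(2*m+k+2) = Q^(k+1) * (Q^(m+1))^2 := by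
      rw [ey2, ← pow_add, ← pow_succ']; congr 1; omega
    have hCC : Q^(2*m+k+3) = Q^(k+1) * (Q^(m+1))^2 := by
      rw [ey2, ← pow_add]; congr 1; omega
    rw [hxx, hyy]
    have := epsAux1 Q (Q^(k+1)) (Q^(m+1)) (Q^(2*m+k+2)) hQ hQx hQy hBB
    calc |(Q * Q^(k+1) - 1 + Q * ((Q^(2*m+k+2) - 1) / (Q^(m+1) - 1)) * (-Q^(k+1) - 1)) /
          (Q * Q^(k+1) - 1 + Q * ((Q^(2*m+k+2) - 1) / (-Q^(2*m+k+3) - 1)) * (-Q^(k+1) - 1))|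
        = |(Q * Q^(k+1) - 1 + Q * ((Q^(2*m+k+2) - 1) / (Q^(m+1) - 1)) * (-Q^(k+1) - 1)) /
          (Q * Q^(k+1) - 1 + Q * ((Q^(2*m+k+2) - 1) / (-(Q^(k+1) * (Q^(m+1))^2) - 1)) * (-Q^(k+1) - 1))| := by
          rw [hCC]
      _ ≤ Q^(k+1) * Q^(m+1) := this
  · -- k odd
    have e1 : (-Q)^(k+2) = -Q^(k+2) := Odd.neg_pow ⟨j+1, by omega⟩ Q
    have e2 : (-Q)^(2*m+k+2) = -Q^(2*m+k+2) := Odd.neg_pow ⟨m+j+1, by omega⟩ Q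
    have e3 : (-Q)^(2*m+k+3) = Q^(2*m+k+3) := Even.neg_pow ⟨m+j+2, by omega⟩ Q
    have e4 : (-Q)^(k+1) = Q^(k+1) := Even.neg_pow ⟨j+1, by omega⟩ Q
    rw [e1, e2, em', e3, e4, eQn]
    have hxx : Q^(k+2) = Q * Q^(k+1) := by rw [pow_succ]; ring
    have hyy : Q * Q^m = Q^(m+1) := by rw [pow_succ]; ring
    have hBB : Q * (-Q^(2*m+k+2)) = -(Q^(k+1) * (Q^(m+1))^2) := by
      rw [ey2, mul_neg, ← pow_add, ← pow_succ']
      congr 2; omega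
    have hCC : Q^(2*m+k+3) = Q^(k+1) * (Q^(m+1))^2 := by
      rw [ey2, ← pow_add]; congr 1; omega
    rw [hxx, hyy]
    have := epsAux2 Q (Q^(k+1)) (Q^(m+1)) (-Q^(2*m+k+2)) hQ hQx hQy hBB
    calc |(-(Q * Q^(k+1)) - 1 + Q * ((-Q^(2*m+k+2) - 1) / (Q^(m+1) - 1)) * (Q^(k+1) - 1)) /
          (-(Q * Q^(k+1)) - 1 + Q * ((-Q^(2*m+k+2) - 1) / (Q^(2*m+k+3) - 1)) * (Q^(k+1) - 1))|
        = |(-(Q * Q^(k+1)) - 1 + Q * ((-Q^(2*m+k+2) - 1) / (Q^(m+1) - 1)) * (Q^(k+1) - 1)) /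
          (-(Q * Q^(k+1)) - 1 + Q * ((-Q^(2*m+k+2) - 1) / (Q^(k+1) * (Q^(m+1))^2 - 1)) * (Q^(k+1) - 1))| := by
          rw [hCC]
      _ ≤ Q^(k+1) * Q^(m+1) := this

theorem alpha_bound_estimate (q n d : ℕ) (hq : 2 ≤ q) (hd1 : 1 ≤ d) (hdn : d ≤ n) :
    (Odd d → alphaBound q n d < (14 / 5 : ℝ) * (q : ℝ) ^ (n * (n - d + 1))) ∧
    (Even d → alphaBound q n d < (14 / 5 : ℝ) * (q : ℝ) ^ (n * (n - d + 2))) := by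
  have hQ : (2:ℝ) ≤ (q:ℝ) := by exact_mod_cast hq
  have hQ0 : (0:ℝ) < (q:ℝ) := by linarith
  have hn1 : 1 ≤ n := le_trans hd1 hdn
  -- P1 bound
  have hP1pos : (0:ℝ) < ∏ i ∈ range n, (1 + (q:ℝ)^(2*i+1)) :=
    prod_pos (fun i _ => by positivity)
  have hP1 : ∏ i ∈ range n, (1 + (q:ℝ)^(2*i+1)) ≤ (9/5) * (q:ℝ)^(n*n) := by
    have h := lemA (q:ℝ) hQ n hn1
    have hc : (0:ℝ) < ((q:ℝ)^2-1) * (q:ℝ)^(2*n) := by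
      apply mul_pos (by nlinarith) (by positivity)
    have h2 : (9/5) * (((q:ℝ)^2-1)*(q:ℝ)^(2*n) - (q:ℝ)) * (q:ℝ)^(n*n) ≤
        (((q:ℝ)^2-1) * (q:ℝ)^(2*n)) * ((9/5) * (q:ℝ)^(n*n)) := by
      have : (0:ℝ) ≤ (9/5) * (q:ℝ) * (q:ℝ)^(n*n) := by positivity
      nlinarith [pow_pos hQ0 (n*n)]
    have h3 : (((q:ℝ)^2-1) * (q:ℝ)^(2*n)) * (∏ i ∈ range n, (1 + (q:ℝ)^(2*i+1))) ≤
        (((q:ℝ)^2-1) * (q:ℝ)^(2*n)) * ((9/5) * (q:ℝ)^(n*n)) := by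
      calc (((q:ℝ)^2-1) * (q:ℝ)^(2*n)) * (∏ i ∈ range n, (1 + (q:ℝ)^(2*i+1)))
          ≤ (9/5) * (((q:ℝ)^2-1)*(q:ℝ)^(2*n) - (q:ℝ)) * (q:ℝ)^(n*n) := h
        _ ≤ (((q:ℝ)^2-1) * (q:ℝ)^(2*n)) * ((9/5) * (q:ℝ)^(n*n)) := h2
    exact le_of_mul_le_mul_left h3 hc
  -- P2 bound
  have hP2 : |∏ i ∈ range (d-1), (1+(-(q:ℝ))^(i+1)) / (1-(-(q:ℝ))^(n+i+1))|
      ≤ (4/3) / (q:ℝ)^(n*(d-1)) := by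
    rcases Nat.eq_or_lt_of_le hd1 with h1 | h1
    · rw [← h1]
      norm_num
    · exact lemB (q:ℝ) hQ n (d-1) (by omega)
  have hP2abs : ∏ i ∈ range (d-1), (1+(-(q:ℝ))^(i+1)) / (1-(-(q:ℝ))^(n+i+1))
      ≤ |∏ i ∈ range (d-1), (1+(-(q:ℝ))^(i+1)) / (1-(-(q:ℝ))^(n+i+1))| := le_abs_self _
  constructor
  · -- odd case
    intro hodd
    have hne : ¬ Even d := by
      have := Nat.odd_iff.mp hodd; rw [Nat.even_iff]; omega
    rw [alphaBound, if_neg hne, mul_one]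
    have epow : (q:ℝ)^(n*n) = (q:ℝ)^(n*(d-1)) * (q:ℝ)^(n*(n-d+1)) := by
      rw [← pow_add]; congr 1; rw [← Nat.mul_add]; congr 1; omega
    have key : (9/5) * (q:ℝ)^(n*n) * ((4/3) / (q:ℝ)^(n*(d-1)))
        = (12/5) * (q:ℝ)^(n*(n-d+1)) := by
      rw [epow]
      have h4 : ((q:ℝ))^(n*(d-1)) ≠ 0 := by positivity
      field_simp
      ring
    calc (∏ i ∈ range n, (1 + (q:ℝ)^(2*i+1))) *
          (∏ i ∈ range (d-1), (1+(-(q:ℝ))^(i+1)) / (1-(-(q:ℝ))^(n+i+1)))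
        ≤ (∏ i ∈ range n, (1 + (q:ℝ)^(2*i+1))) *
          |∏ i ∈ range (d-1), (1+(-(q:ℝ))^(i+1)) / (1-(-(q:ℝ))^(n+i+1))| :=
          mul_le_mul_of_nonneg_left hP2abs (le_of_lt hP1pos)
      _ ≤ ((9/5) * (q:ℝ)^(n*n)) *
          |∏ i ∈ range (d-1), (1+(-(q:ℝ))^(i+1)) / (1-(-(q:ℝ))^(n+i+1))| :=
          mul_le_mul_of_nonneg_right hP1 (abs_nonneg _)
      _ ≤ ((9/5) * (q:ℝ)^(n*n)) * ((4/3) / (q:ℝ)^(n*(d-1))) :=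
          mul_le_mul_of_nonneg_left hP2 (by positivity)
      _ = (12/5) * (q:ℝ)^(n*(n-d+1)) := key
      _ < (14/5) * (q:ℝ)^(n*(n-d+1)) := by
          have : (0:ℝ) < (q:ℝ)^(n*(n-d+1)) := by positivity
          nlinarith
  · -- even case
    intro heven
    have hd2 : 2 ≤ d := by
      have := Nat.even_iff.mp heven; omega
    have hE : |epsHerm q n d| ≤ (q:ℝ)^n := lemC q n d hq hd2 hdn heven
    rw [alphaBound, if_pos heven]
    have epow : (q:ℝ)^(n*n) * (q:ℝ)^n = (q:ℝ)^(n*(d-1)) * (q:ℝ)^(n*(n-d+2)) := by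
      rw [← pow_add, ← pow_add]; congr 1; rw [← Nat.mul_add]
      have e1 : (d-1) + (n-d+2) = n+1 := by omega
      rw [e1]; rw [Nat.mul_add]; omega
    have key : (9/5) * (q:ℝ)^(n*n) * ((4/3) / (q:ℝ)^(n*(d-1)) * (q:ℝ)^n)
        = (12/5) * (q:ℝ)^(n*(n-d+2)) := by
      have h4 : ((q:ℝ))^(n*(d-1)) ≠ 0 := by positivity
      field_simp
      nlinarith [epow]
    have habs : (∏ i ∈ range (d-1), (1+(-(q:ℝ))^(i+1)) / (1-(-(q:ℝ))^(n+i+1))) * epsHerm q n d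
        ≤ |∏ i ∈ range (d-1), (1+(-(q:ℝ))^(i+1)) / (1-(-(q:ℝ))^(n+i+1))| * |epsHerm q n d| := by
      rw [← abs_mul]; exact le_abs_self _
    calc (∏ i ∈ range n, (1 + (q:ℝ)^(2*i+1))) *
          (∏ i ∈ range (d-1), (1+(-(q:ℝ))^(i+1)) / (1-(-(q:ℝ))^(n+i+1))) * epsHerm q n d
        = (∏ i ∈ range n, (1 + (q:ℝ)^(2*i+1))) *
          ((∏ i ∈ range (d-1), (1+(-(q:ℝ))^(i+1)) / (1-(-(q:ℝ))^(n+i+1))) * epsHerm q n d) := by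
          ring
      _ ≤ (∏ i ∈ range n, (1 + (q:ℝ)^(2*i+1))) *
          (|∏ i ∈ range (d-1), (1+(-(q:ℝ))^(i+1)) / (1-(-(q:ℝ))^(n+i+1))| * |epsHerm q n d|) :=
          mul_le_mul_of_nonneg_left habs (le_of_lt hP1pos)
      _ ≤ ((9/5) * (q:ℝ)^(n*n)) *
          (|∏ i ∈ range (d-1), (1+(-(q:ℝ))^(i+1)) / (1-(-(q:ℝ))^(n+i+1))| * |epsHerm q n d|) :=
          mul_le_mul_of_nonneg_right hP1 (mul_nonneg (abs_nonneg _) (abs_nonneg _))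
      _ ≤ ((9/5) * (q:ℝ)^(n*n)) * ((4/3) / (q:ℝ)^(n*(d-1)) * (q:ℝ)^n) := by
          apply mul_le_mul_of_nonneg_left _ (by positivity)
          exact mul_le_mul hP2 hE (abs_nonneg _) (by positivity)
      _ = (12/5) * (q:ℝ)^(n*(n-d+2)) := key
      _ < (14/5) * (q:ℝ)^(n*(n-d+2)) := by
          have : (0:ℝ) < (q:ℝ)^(n*(n-d+2)) := by positivity
          nlinarith
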